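/- Let N ≥ 3, p = (N+2)/(N-2), U(y) = (√(N(N-2))/(1+|y|²))^((N-2)/2), and α_N = (N-2)/(4(N-1)). Let (R_{ij}) be a symmetric N×N real matrix and set S = Σᵢ R_{ii}. Define V(y) = (N(N-2))^((N-2)/4) · [ ((|y|²+3)/(12(1+|y|²)^{N/2})) Σ_{i,j} R_{ij} yⁱ yʲ − (S/(24(N-1))) · (|y|⁴+3)/(1+|y|²)^{N/2} ]. Then on ℝ^N \ {0}: ΔV + p U^{p-1} V = (1/3) Σ_{i,j} R_{ij} (yⁱ yʲ/|y|) ∂_r U + α_N S U, where ∂_r U(y) is the radial derivative of U, i.e. ∂_r U(y) = U'(|y|) for U viewed as a radial function. -/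

import Mathlib

noncomputable section
open Real

/-- The Aubin–Talenti bubble on `ℝ^N`. -/
def bubble (N : ℕ) (y : EuclideanSpace ℝ (Fin N)) : ℝ :=
  (Real.sqrt ((N : ℝ) * ((N : ℝ) - 2)) / (1 + ‖y‖ ^ 2)) ^ (((N : ℝ) - 2) / 2)

/-- The bubble as a radial profile: `U(y) = bubbleRad N |y|`. -/
def bubbleRad (N : ℕ) (r : ℝ) : ℝ :=
  (Real.sqrt ((N : ℝ) * ((N : ℝ) - 2)) / (1 + r ^ 2)) ^ (((N : ℝ) - 2) / 2)

/-- The Euclidean Laplacian `Δf = Σᵢ ∂²f/∂yᵢ²`. -/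
def lap {N : ℕ} (f : EuclideanSpace ℝ (Fin N) → ℝ) (y : EuclideanSpace ℝ (Fin N)) : ℝ :=
  ∑ i : Fin N,
    fderiv ℝ (fun z => fderiv ℝ f z (EuclideanSpace.single i 1)) y (EuclideanSpace.single i 1)

/-- The correcting term `V`. -/
def corrV (N : ℕ) (R : Matrix (Fin N) (Fin N) ℝ) (y : EuclideanSpace ℝ (Fin N)) : ℝ :=
  ((N : ℝ) * ((N : ℝ) - 2)) ^ (((N : ℝ) - 2) / 4) *
    ((‖y‖ ^ 2 + 3) / (12 * (1 + ‖y‖ ^ 2) ^ ((N : ℝ) / 2)) *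
        ∑ i, ∑ j, R i j * y i * y j
      - (∑ i, R i i) / (24 * ((N : ℝ) - 1)) * (‖y‖ ^ 4 + 3) / (1 + ‖y‖ ^ 2) ^ ((N : ℝ) / 2))

namespace Stmt11Aux

/-! ### One-dimensional calculus -/

lemma hasDerivAt_one_add_rpow (e : ℝ) {t : ℝ} (ht : -1 < t) :
    HasDerivAt (fun s : ℝ => (1 + s) ^ e) (e * (1 + t) ^ (e - 1)) t := by
  have h1 : HasDerivAt (fun s : ℝ => 1 + s) 1 t := (hasDerivAt_id t).const_add 1
  have h2 := (Real.hasDerivAt_rpow_const (x := 1 + t) (p := e)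
      (Or.inl (by linarith))).comp t h1
  exact h2.congr_deriv (mul_one _)

def Bb (N : ℕ) (k : ℕ) (t : ℝ) : ℝ := (1 + t) ^ (-(N : ℝ) / 2) / (1 + t) ^ k

lemma Bb_eq (N k : ℕ) {t : ℝ} (ht : -1 < t) :
    (1 + t) ^ (-(N : ℝ) / 2 - k) = Bb N k t := by
  rw [Bb, Real.rpow_sub (by linarith), Real.rpow_natCast]

lemma hasDerivAt_Bb (N k : ℕ) {t : ℝ} (ht : -1 < t) :
    HasDerivAt (Bb N k) ((-(N : ℝ) / 2 - k) * Bb N (k + 1) t) t := by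
  have h := hasDerivAt_one_add_rpow (-(N : ℝ) / 2 - k) ht
  have hval : (-(N : ℝ) / 2 - k - 1) = -(N : ℝ) / 2 - ((k + 1 : ℕ) : ℝ) := by
    push_cast; ring
  rw [hval, Bb_eq N (k + 1) ht] at h
  apply h.congr_of_eventuallyEq
  filter_upwards [eventually_gt_nhds ht] with s hs
  exact (Bb_eq N k hs).symm

def ph1 (N : ℕ) (t : ℝ) : ℝ := (t + 3) / 12 * Bb N 0 t
def dph1 (N : ℕ) (t : ℝ) : ℝ :=
  1 / 12 * Bb N 0 t + (t + 3) / 12 * (-(N : ℝ) / 2 * Bb N 1 t)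
def ddph1 (N : ℕ) (t : ℝ) : ℝ :=
  1 / 6 * (-(N : ℝ) / 2 * Bb N 1 t)
    + (t + 3) / 12 * (-(N : ℝ) / 2 * ((-(N : ℝ) / 2 - 1) * Bb N 2 t))
def ph2 (N : ℕ) (c : ℝ) (t : ℝ) : ℝ := c * ((t ^ 2 + 3) * Bb N 0 t)
def dph2 (N : ℕ) (c : ℝ) (t : ℝ) : ℝ :=
  c * ((2 * t) * Bb N 0 t + (t ^ 2 + 3) * (-(N : ℝ) / 2 * Bb N 1 t))
def ddph2 (N : ℕ) (c : ℝ) (t : ℝ) : ℝ :=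
  c * (2 * Bb N 0 t + (4 * t) * (-(N : ℝ) / 2 * Bb N 1 t)
    + (t ^ 2 + 3) * (-(N : ℝ) / 2 * ((-(N : ℝ) / 2 - 1) * Bb N 2 t)))

lemma hasDerivAt_ph1 (N : ℕ) {t : ℝ} (ht : -1 < t) :
    HasDerivAt (ph1 N) (dph1 N t) t := by
  have h := (((hasDerivAt_id t).add_const 3).div_const 12).mul (hasDerivAt_Bb N 0 ht)
  simp only [id_eq] at h
  have h01 : Bb N (0 + 1) = Bb N 1 := rfl
  rw [h01] at h
  refine h.congr_deriv ?_
  unfold dph1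
  push_cast
  ring

lemma hasDerivAt_dph1 (N : ℕ) {t : ℝ} (ht : -1 < t) :
    HasDerivAt (dph1 N) (ddph1 N t) t := by
  have h := (((hasDerivAt_Bb N 0 ht).const_mul (1 / 12 : ℝ))).add
    ((((hasDerivAt_id t).add_const 3).div_const 12).mul
      ((hasDerivAt_Bb N 1 ht).const_mul (-(N : ℝ) / 2)))
  simp only [id_eq] at h
  have h01 : Bb N (0 + 1) = Bb N 1 := rfl
  have h12 : Bb N (1 + 1) = Bb N 2 := rfl
  rw [h01, h12] at h
  refine h.congr_deriv ?_
  unfold ddph1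
  push_cast
  ring

lemma hasDerivAt_ph2 (N : ℕ) (c : ℝ) {t : ℝ} (ht : -1 < t) :
    HasDerivAt (ph2 N c) (dph2 N c t) t := by
  have h := (((hasDerivAt_pow 2 t).add_const 3).mul (hasDerivAt_Bb N 0 ht)).const_mul c
  have h01 : Bb N (0 + 1) = Bb N 1 := rfl
  rw [h01] at h
  refine h.congr_deriv ?_
  unfold dph2
  push_cast
  ring

lemma hasDerivAt_dph2 (N : ℕ) (c : ℝ) {t : ℝ} (ht : -1 < t) :
    HasDerivAt (dph2 N c) (ddph2 N c t) t := by
  have h := ((((hasDerivAt_id t).const_mul 2).mul (hasDerivAt_Bb N 0 ht)).add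
    (((hasDerivAt_pow 2 t).add_const 3).mul
      ((hasDerivAt_Bb N 1 ht).const_mul (-(N : ℝ) / 2)))).const_mul c
  simp only [id_eq] at h
  have h01 : Bb N (0 + 1) = Bb N 1 := rfl
  have h12 : Bb N (1 + 1) = Bb N 2 := rfl
  rw [h01, h12] at h
  refine h.congr_deriv ?_
  unfold ddph2
  push_cast
  ring

/-! ### Spatial calculus -/

variable {N : ℕ}

def nn {N : ℕ} (z : EuclideanSpace ℝ (Fin N)) : ℝ := ∑ i, z i ^ 2

lemma nn_nonneg (z : EuclideanSpace ℝ (Fin N)) : 0 ≤ nn z :=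
  Finset.sum_nonneg fun _ _ => sq_nonneg _

lemma neg_one_lt_nn (z : EuclideanSpace ℝ (Fin N)) : (-1 : ℝ) < nn z := by
  have := nn_nonneg z; linarith

lemma norm_sq_eq_nn (z : EuclideanSpace ℝ (Fin N)) : ‖z‖ ^ 2 = nn z := by
  rw [EuclideanSpace.norm_eq, Real.sq_sqrt (Finset.sum_nonneg fun i _ => sq_nonneg _)]
  simp [nn, sq_abs]

def Lnn {N : ℕ} (z : EuclideanSpace ℝ (Fin N)) : EuclideanSpace ℝ (Fin N) →L[ℝ] ℝ :=
  ∑ i, (2 * z i) • (EuclideanSpace.proj i : EuclideanSpace ℝ (Fin N) →L[ℝ] ℝ)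

lemma hasFDerivAt_nn (z : EuclideanSpace ℝ (Fin N)) :
    HasFDerivAt nn (Lnn z) z := by
  have h : ∀ i ∈ Finset.univ, HasFDerivAt (fun z : EuclideanSpace ℝ (Fin N) => z i ^ 2)
      ((2 * z i) • (EuclideanSpace.proj i : EuclideanSpace ℝ (Fin N) →L[ℝ] ℝ)) z := by
    intro i _
    have hm := ((EuclideanSpace.proj (𝕜 := ℝ) i).hasFDerivAt (x := z)).mul
      ((EuclideanSpace.proj (𝕜 := ℝ) i).hasFDerivAt (x := z))
    have hc : (2 * z i) • (EuclideanSpace.proj i : EuclideanSpace ℝ (Fin N) →L[ℝ] ℝ)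
        = (EuclideanSpace.proj i) z • (EuclideanSpace.proj (𝕜 := ℝ) i)
          + (EuclideanSpace.proj i) z • (EuclideanSpace.proj (𝕜 := ℝ) i) := by
      ext v; simp [PiLp.proj_apply, two_mul]; ring
    rw [hc]
    exact hm.congr_of_eventuallyEq (by filter_upwards with w; simp [sq, PiLp.proj_apply])
  exact HasFDerivAt.fun_sum h

def Qf {N : ℕ} (R : Matrix (Fin N) (Fin N) ℝ) (z : EuclideanSpace ℝ (Fin N)) : ℝ :=
  ∑ i, ∑ j, R i j * z i * z j

def LQ {N : ℕ} (R : Matrix (Fin N) (Fin N) ℝ) (z : EuclideanSpace ℝ (Fin N)) :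
    EuclideanSpace ℝ (Fin N) →L[ℝ] ℝ :=
  ∑ i, ∑ j, ((R i j * z i) • (EuclideanSpace.proj j : EuclideanSpace ℝ (Fin N) →L[ℝ] ℝ)
    + z j • (R i j • (EuclideanSpace.proj i : EuclideanSpace ℝ (Fin N) →L[ℝ] ℝ)))

lemma hasFDerivAt_Qf (R : Matrix (Fin N) (Fin N) ℝ) (z : EuclideanSpace ℝ (Fin N)) :
    HasFDerivAt (Qf R) (LQ R z) z := by
  apply HasFDerivAt.fun_sum
  intro i _
  apply HasFDerivAt.fun_sum
  intro j _
  exact (((EuclideanSpace.proj (𝕜 := ℝ) i).hasFDerivAt (x := z)).const_mul (R i j)).mul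
    ((EuclideanSpace.proj (𝕜 := ℝ) j).hasFDerivAt (x := z))

def DQ {N : ℕ} (R : Matrix (Fin N) (Fin N) ℝ) (i : Fin N)
    (z : EuclideanSpace ℝ (Fin N)) : ℝ :=
  (∑ j, R i j * z j) + (∑ j, R j i * z j)

def LDQ {N : ℕ} (R : Matrix (Fin N) (Fin N) ℝ) (i : Fin N) :
    EuclideanSpace ℝ (Fin N) →L[ℝ] ℝ :=
  (∑ j, R i j • (EuclideanSpace.proj j : EuclideanSpace ℝ (Fin N) →L[ℝ] ℝ))
    + ∑ j, R j i • (EuclideanSpace.proj j : EuclideanSpace ℝ (Fin N) →L[ℝ] ℝ)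

lemma hasFDerivAt_DQ (R : Matrix (Fin N) (Fin N) ℝ) (i : Fin N)
    (z : EuclideanSpace ℝ (Fin N)) : HasFDerivAt (DQ R i) (LDQ R i) z := by
  refine HasFDerivAt.add ?_ ?_
  · exact HasFDerivAt.fun_sum fun j _ =>
      ((EuclideanSpace.proj (𝕜 := ℝ) j).hasFDerivAt (x := z)).const_mul (R i j)
  · exact HasFDerivAt.fun_sum fun j _ =>
      ((EuclideanSpace.proj (𝕜 := ℝ) j).hasFDerivAt (x := z)).const_mul (R j i)

lemma Lnn_apply (z : EuclideanSpace ℝ (Fin N)) (k : Fin N) :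
    Lnn z (EuclideanSpace.single k 1) = 2 * z k := by
  simp [Lnn, ContinuousLinearMap.sum_apply, PiLp.proj_apply, EuclideanSpace.single_apply]

lemma LQ_apply (R : Matrix (Fin N) (Fin N) ℝ) (z : EuclideanSpace ℝ (Fin N)) (k : Fin N) :
    LQ R z (EuclideanSpace.single k 1) = DQ R k z := by
  simp only [LQ, DQ, ContinuousLinearMap.sum_apply, ContinuousLinearMap.add_apply,
    ContinuousLinearMap.smul_apply, PiLp.proj_apply, EuclideanSpace.single_apply,
    smul_eq_mul, mul_ite, mul_one, mul_zero]
  simp [Finset.sum_add_distrib, Finset.sum_ite_eq, Finset.sum_ite_eq']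
  rw [add_comm]
  congr 1
  exact Finset.sum_congr rfl fun j _ => by ring

lemma LDQ_apply (R : Matrix (Fin N) (Fin N) ℝ) (i : Fin N) (k : Fin N) :
    LDQ R i (EuclideanSpace.single k 1) = R i k + R k i := by
  simp [LDQ, ContinuousLinearMap.sum_apply, PiLp.proj_apply, EuclideanSpace.single_apply,
    mul_ite, Finset.sum_ite_eq, Finset.sum_ite_eq']

/-! ### The first and second derivatives of `corrV` -/

def AA (N : ℕ) : ℝ := ((N : ℝ) * ((N : ℝ) - 2)) ^ (((N : ℝ) - 2) / 4)

def D1 {N : ℕ} (R : Matrix (Fin N) (Fin N) ℝ) (c : ℝ) (i : Fin N)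
    (z : EuclideanSpace ℝ (Fin N)) : ℝ :=
  AA N * (dph1 N (nn z) * (2 * z i) * Qf R z + ph1 N (nn z) * DQ R i z
    - dph2 N c (nn z) * (2 * z i))

lemma corrV_eq (N : ℕ) (R : Matrix (Fin N) (Fin N) ℝ) :
    corrV N R = fun z => AA N *
      (ph1 N (nn z) * Qf R z - ph2 N ((∑ i, R i i) / (24 * ((N : ℝ) - 1))) (nn z)) := by
  funext z
  have hn := norm_sq_eq_nn z
  have hpos : (0 : ℝ) < 1 + nn z := by have := nn_nonneg z; linarith
  have h4 : ‖z‖ ^ 4 = nn z ^ 2 := by rw [show ‖z‖ ^ 4 = (‖z‖ ^ 2) ^ 2 by ring, hn]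
  have hB : Bb N 0 (nn z) = ((1 + nn z) ^ ((N : ℝ) / 2))⁻¹ := by
    rw [Bb, pow_zero, div_one, neg_div, Real.rpow_neg hpos.le]
  have hP : (1 + nn z) ^ ((N : ℝ) / 2) ≠ 0 := ne_of_gt (Real.rpow_pos_of_pos hpos _)
  simp only [corrV, Qf, ph1, ph2, AA, hn, h4, hB]
  field_simp

lemma fderiv_corrV (N : ℕ) (R : Matrix (Fin N) (Fin N) ℝ)
    (z : EuclideanSpace ℝ (Fin N)) (i : Fin N) :
    fderiv ℝ (corrV N R) z (EuclideanSpace.single i 1)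
      = D1 R ((∑ i, R i i) / (24 * ((N : ℝ) - 1))) i z := by
  set c := (∑ i, R i i) / (24 * ((N : ℝ) - 1)) with hc
  have ht := neg_one_lt_nn z
  have h1 := (hasDerivAt_ph1 N ht).comp_hasFDerivAt z (hasFDerivAt_nn z)
  have h2 := (hasDerivAt_ph2 N c ht).comp_hasFDerivAt z (hasFDerivAt_nn z)
  have hQ := hasFDerivAt_Qf R z
  obtain ⟨L, hL, hLv⟩ : ∃ L : EuclideanSpace ℝ (Fin N) →L[ℝ] ℝ,
      HasFDerivAt (fun z : EuclideanSpace ℝ (Fin N) =>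
        AA N * (ph1 N (nn z) * Qf R z - ph2 N c (nn z))) L z ∧
      L (EuclideanSpace.single i 1) = D1 R c i z := by
    refine ⟨_, ((h1.mul hQ).sub h2).const_mul (AA N), ?_⟩
    simp only [ContinuousLinearMap.coe_smul', Pi.smul_apply, ContinuousLinearMap.add_apply,
      ContinuousLinearMap.coe_sub', Pi.sub_apply, ContinuousLinearMap.smul_apply,
      Lnn_apply, LQ_apply, Function.comp_apply, smul_eq_mul, D1]
    ring
  rw [corrV_eq N R, hL.fderiv, hLv]

lemma fderiv_D1 (N : ℕ) (R : Matrix (Fin N) (Fin N) ℝ) (c : ℝ)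
    (y : EuclideanSpace ℝ (Fin N)) (i : Fin N) :
    fderiv ℝ (D1 R c i) y (EuclideanSpace.single i 1)
      = AA N * ((ddph1 N (nn y) * (2 * y i) * (2 * y i) + dph1 N (nn y) * 2) * Qf R y
          + dph1 N (nn y) * (2 * y i) * DQ R i y
          + (dph1 N (nn y) * (2 * y i) * DQ R i y + ph1 N (nn y) * (R i i + R i i))
          - (ddph2 N c (nn y) * (2 * y i) * (2 * y i) + dph2 N c (nn y) * 2)) := by
  have ht := neg_one_lt_nn y
  have hd1 := (hasDerivAt_dph1 N ht).comp_hasFDerivAt y (hasFDerivAt_nn y)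
  have hp1 := (hasDerivAt_ph1 N ht).comp_hasFDerivAt y (hasFDerivAt_nn y)
  have hd2 := (hasDerivAt_dph2 N c ht).comp_hasFDerivAt y (hasFDerivAt_nn y)
  have hproj : HasFDerivAt (fun z : EuclideanSpace ℝ (Fin N) => 2 * z i)
      ((2 : ℝ) • (EuclideanSpace.proj i : EuclideanSpace ℝ (Fin N) →L[ℝ] ℝ)) y :=
    ((EuclideanSpace.proj (𝕜 := ℝ) i).hasFDerivAt (x := y)).const_mul 2
  have hQ := hasFDerivAt_Qf R y
  have hDQ := hasFDerivAt_DQ R i y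
  obtain ⟨L, hL, hLv⟩ : ∃ L : EuclideanSpace ℝ (Fin N) →L[ℝ] ℝ,
      HasFDerivAt (D1 R c i) L y ∧
      L (EuclideanSpace.single i 1)
        = AA N * ((ddph1 N (nn y) * (2 * y i) * (2 * y i) + dph1 N (nn y) * 2) * Qf R y
          + dph1 N (nn y) * (2 * y i) * DQ R i y
          + (dph1 N (nn y) * (2 * y i) * DQ R i y + ph1 N (nn y) * (R i i + R i i))
          - (ddph2 N c (nn y) * (2 * y i) * (2 * y i) + dph2 N c (nn y) * 2)) := by
    refine ⟨_, ((((hd1.mul hproj).mul hQ).add (hp1.mul hDQ)).sub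
      (hd2.mul hproj)).const_mul (AA N), ?_⟩
    simp only [ContinuousLinearMap.coe_smul', Pi.smul_apply, ContinuousLinearMap.add_apply,
      ContinuousLinearMap.coe_sub', Pi.sub_apply, ContinuousLinearMap.smul_apply,
      Lnn_apply, LQ_apply, LDQ_apply, Function.comp_apply, smul_eq_mul,
      PiLp.proj_apply, EuclideanSpace.single_apply, if_pos rfl, ite_true, Pi.mul_apply]
    ring
  rw [hL.fderiv, hLv]


lemma sum_yDQ (R : Matrix (Fin N) (Fin N) ℝ) (y : EuclideanSpace ℝ (Fin N)) :
    ∑ i, y i * DQ R i y = 2 * Qf R y := by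
  have h1 : ∑ i, y i * ∑ j, R i j * y j = Qf R y := by
    rw [Qf]
    exact Finset.sum_congr rfl fun i _ => by
      rw [Finset.mul_sum]; exact Finset.sum_congr rfl fun j _ => by ring
  have h2 : ∑ i, y i * ∑ j, R j i * y j = Qf R y := by
    have : ∑ i, y i * ∑ j, R j i * y j = ∑ i, ∑ j, R j i * y j * y i := by
      exact Finset.sum_congr rfl fun i _ => by
        rw [Finset.mul_sum]; exact Finset.sum_congr rfl fun j _ => by ring
    rw [this, Finset.sum_comm, Qf]
  simp only [DQ, mul_add, Finset.sum_add_distrib, h1, h2]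
  ring

lemma lap_corrV (N : ℕ) (R : Matrix (Fin N) (Fin N) ℝ) (y : EuclideanSpace ℝ (Fin N)) :
    lap (corrV N R) y
      = AA N * (4 * nn y * ddph1 N (nn y) * Qf R y
        + (2 * (N : ℝ) + 8) * dph1 N (nn y) * Qf R y
        + 2 * ph1 N (nn y) * (∑ i, R i i)
        - (4 * nn y * ddph2 N ((∑ i, R i i) / (24 * ((N : ℝ) - 1))) (nn y)
            + 2 * (N : ℝ) * dph2 N ((∑ i, R i i) / (24 * ((N : ℝ) - 1))) (nn y))) := by
  set c := (∑ i, R i i) / (24 * ((N : ℝ) - 1)) with hc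
  have hfun : ∀ i : Fin N,
      (fun z => fderiv ℝ (corrV N R) z (EuclideanSpace.single i 1)) = D1 R c i :=
    fun i => funext fun z => fderiv_corrV N R z i
  rw [lap]
  calc ∑ i : Fin N, fderiv ℝ (fun z => fderiv ℝ (corrV N R) z (EuclideanSpace.single i 1))
          y (EuclideanSpace.single i 1)
      = ∑ i : Fin N,
          ((AA N * (4 * (ddph1 N (nn y) * Qf R y - ddph2 N c (nn y)))) * y i ^ 2
          + (AA N * (2 * dph1 N (nn y) * Qf R y - 2 * dph2 N c (nn y)))
          + (AA N * (4 * dph1 N (nn y))) * (y i * DQ R i y)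
          + (AA N * (2 * ph1 N (nn y))) * R i i) := by
        refine Finset.sum_congr rfl fun i _ => ?_
        rw [hfun i, fderiv_D1]
        ring
    _ = _ := by
        simp only [Finset.sum_add_distrib, ← Finset.mul_sum, Finset.sum_const,
          Finset.card_univ, Fintype.card_fin, nsmul_eq_mul, sum_yDQ]
        have hn : ∑ i, y i ^ 2 = nn y := rfl
        rw [hn]
        ring

/-! ### RHS normal forms -/

lemma key_eq {N : ℕ} (hN : 3 ≤ N) {s : ℝ} (hs : 0 ≤ s) :
    (Real.sqrt ((N : ℝ) * ((N : ℝ) - 2)) / (1 + s)) ^ (((N : ℝ) - 2) / 2)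
      = AA N * (1 + s) ^ (-(((N : ℝ) - 2) / 2)) := by
  have hn3 : (3 : ℝ) ≤ (N : ℝ) := by exact_mod_cast hN
  have ha : (0 : ℝ) < (N : ℝ) * ((N : ℝ) - 2) := by nlinarith
  have hpos : (0 : ℝ) < 1 + s := by linarith
  rw [Real.div_rpow (Real.sqrt_nonneg _) hpos.le, Real.sqrt_eq_rpow,
    ← Real.rpow_mul ha.le, show (1 / 2 * (((N : ℝ) - 2) / 2)) = ((N : ℝ) - 2) / 4 by ring,
    div_eq_mul_inv, ← Real.rpow_neg hpos.le, AA]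

lemma bubble_eq {N : ℕ} (hN : 3 ≤ N) (y : EuclideanSpace ℝ (Fin N)) :
    bubble N y = AA N * ((1 + ‖y‖ ^ 2) ^ (-(N : ℝ) / 2) * (1 + ‖y‖ ^ 2)) := by
  have hpos : (0 : ℝ) < 1 + ‖y‖ ^ 2 := by positivity
  rw [bubble, key_eq hN (by positivity),
    show -(((N : ℝ) - 2) / 2) = -(N : ℝ) / 2 + 1 by ring,
    Real.rpow_add hpos, Real.rpow_one]

lemma bubble_pow {N : ℕ} (hN : 3 ≤ N) (y : EuclideanSpace ℝ (Fin N)) :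
    (bubble N y) ^ (((N : ℝ) + 2) / ((N : ℝ) - 2) - 1)
      = (N : ℝ) * ((N : ℝ) - 2) / (1 + ‖y‖ ^ 2) ^ 2 := by
  have hn3 : (3 : ℝ) ≤ (N : ℝ) := by exact_mod_cast hN
  have ha : (0 : ℝ) < (N : ℝ) * ((N : ℝ) - 2) := by nlinarith
  have hpos : (0 : ℝ) < 1 + ‖y‖ ^ 2 := by positivity
  have hX : (0 : ℝ) < Real.sqrt ((N : ℝ) * ((N : ℝ) - 2)) / (1 + ‖y‖ ^ 2) :=
    div_pos (Real.sqrt_pos.2 ha) hpos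
  have hn2 : (N : ℝ) - 2 ≠ 0 := by linarith
  rw [bubble, ← Real.rpow_mul hX.le,
    show (((N : ℝ) - 2) / 2 * (((N : ℝ) + 2) / ((N : ℝ) - 2) - 1)) = 2 by
      field_simp; ring,
    Real.rpow_two, div_pow, Real.sq_sqrt ha.le]

lemma deriv_bubbleRad {N : ℕ} (hN : 3 ≤ N) (r : ℝ) :
    deriv (bubbleRad N) r
      = AA N * (-(((N : ℝ) - 2) / 2) * (1 + r ^ 2) ^ (-(N : ℝ) / 2) * (2 * r)) := by
  have hrad : bubbleRad N = fun r : ℝ => AA N * (1 + r ^ 2) ^ (-(((N : ℝ) - 2) / 2)) :=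
    funext fun r => key_eq hN (by positivity)
  have h1 : HasDerivAt (fun r : ℝ => 1 + r ^ 2) (2 * r) r := by
    simpa using ((hasDerivAt_pow 2 r).const_add 1)
  have h2 := (Real.hasDerivAt_rpow_const (x := 1 + r ^ 2) (p := -(((N : ℝ) - 2) / 2))
    (Or.inl (by positivity))).comp r h1
  have h3 : HasDerivAt (fun r : ℝ => AA N * (1 + r ^ 2) ^ (-(((N : ℝ) - 2) / 2)))
      (AA N * (-(((N : ℝ) - 2) / 2) * (1 + r ^ 2) ^ (-(((N : ℝ) - 2) / 2) - 1) * (2 * r)))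
      r := h2.const_mul (AA N)
  rw [hrad, h3.deriv, show -(((N : ℝ) - 2) / 2) - 1 = -(N : ℝ) / 2 by ring]

end Stmt11Aux

set_option maxHeartbeats 1000000 in
open Stmt11Aux in
theorem stmt11 (N : ℕ) (hN : 3 ≤ N) (R : Matrix (Fin N) (Fin N) ℝ)
    (hR : R.IsSymm) :
    ∀ y : EuclideanSpace ℝ (Fin N), y ≠ 0 →
      lap (corrV N R) y
          + (((N : ℝ) + 2) / ((N : ℝ) - 2)) *
            (bubble N y) ^ (((N : ℝ) + 2) / ((N : ℝ) - 2) - 1) * corrV N R y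
        = (1 / 3) * (∑ i, ∑ j, R i j * y i * y j / ‖y‖) * deriv (bubbleRad N) ‖y‖
          + (((N : ℝ) - 2) / (4 * ((N : ℝ) - 1))) * (∑ i, R i i) * bubble N y := by
  intro y hy
  have hn3 : (3 : ℝ) ≤ (N : ℝ) := by exact_mod_cast hN
  have hn2 : (N : ℝ) - 2 ≠ 0 := by linarith
  have hn1 : (N : ℝ) - 1 ≠ 0 := by linarith
  have hr : ‖y‖ ≠ 0 := norm_ne_zero_iff.2 hy
  have hpos : (0 : ℝ) < 1 + ‖y‖ ^ 2 := by positivity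
  have hpos' : (1 : ℝ) + ‖y‖ ^ 2 ≠ 0 := hpos.ne'
  have hsum : (∑ i, ∑ j, R i j * y i * y j / ‖y‖) = Qf R y / ‖y‖ := by
    simp [Qf, Finset.sum_div]
  rw [lap_corrV, bubble_pow hN, bubble_eq hN, deriv_bubbleRad hN, hsum]
  simp only [corrV_eq N R]
  rw [show nn y = ‖y‖ ^ 2 from (norm_sq_eq_nn y).symm]
  rw [show ((N : ℝ) + 2) / ((N : ℝ) - 2) * ((N : ℝ) * ((N : ℝ) - 2) / (1 + ‖y‖ ^ 2) ^ 2)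
      = (N : ℝ) * ((N : ℝ) + 2) / (1 + ‖y‖ ^ 2) ^ 2 from by field_simp]
  rw [show 1 / 3 * (Qf R y / ‖y‖) * (AA N * (-(((N : ℝ) - 2) / 2) *
        (1 + ‖y‖ ^ 2) ^ (-(N : ℝ) / 2) * (2 * ‖y‖)))
      = -(((N : ℝ) - 2) / 3) * Qf R y * AA N * ((1 + ‖y‖ ^ 2) ^ (-(N : ℝ) / 2)) from by
    field_simp]
  simp only [ph1, dph1, ddph1, ph2, dph2, ddph2, Bb, pow_zero, pow_one, div_one]
  set t := ‖y‖ ^ 2 with hts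
  set W := (1 + t) ^ (-(N : ℝ) / 2) with hWs
  set n := (N : ℝ) with hns
  set A := AA N with hAs
  set Q := Qf R y with hQs
  set S := ∑ i, R i i with hSs
  clear_value t W n A Q S
  field_simp
  ring
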